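/- Let α ≥ 0 and β ≥ 0. The average total reward R_{α,β} is concave on Δ; that is, for all p, q ∈ Δ and t ∈ [0,1], R_{α,β}(t·p + (1−t)·q) ≥ t·R_{α,β}(p) + (1−t)·R_{α,β}(q). -/

import Mathlib

open Finset

/-- The average total reward `R_{α,β}(p)`, with the convention `0 · log 0 = 0`
(automatic since `Real.log 0 = 0`). -/
noncomputable def Ravg {S A : Type} [Fintype S] [Fintype A]
    (r : S → A → ℝ) (α β : ℝ) (p : S → A → ℝ) : ℝ :=
  (∑ s, ∑ a, p s a * r s a)
    - α * ∑ s, ∑ a, p s a * Real.log (p s a)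
    - (β - α) * ∑ s, ∑ a, p s a * Real.log (∑ b, p s b)

noncomputable def phiR (x y : ℝ) : ℝ := x * Real.log x - x * Real.log y

lemma phiR_scale {t x y : ℝ} (ht : 0 ≤ t) (hx : 0 ≤ x) (hxy : x ≤ y) :
    phiR (t * x) (t * y) = t * phiR x y := by
  rcases eq_or_lt_of_le ht with h | h
  · simp [phiR, ← h]
  rcases eq_or_lt_of_le hx with h2 | h2
  · simp [phiR, ← h2]
  have hy : 0 < y := lt_of_lt_of_le h2 hxy
  simp only [phiR, Real.log_mul (ne_of_gt h) (ne_of_gt h2),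
    Real.log_mul (ne_of_gt h) (ne_of_gt hy)]
  ring

lemma phiR_add {a b c d : ℝ} (ha : 0 ≤ a) (hac : a ≤ c) (hb : 0 ≤ b) (hbd : b ≤ d) :
    phiR (a + b) (c + d) ≤ phiR a c + phiR b d := by
  rcases eq_or_lt_of_le (ha.trans hac) with hc | hc
  · have ha0 : a = 0 := le_antisymm (hac.trans hc.ge) ha
    simp [phiR, ha0, ← hc]
  rcases eq_or_lt_of_le (hb.trans hbd) with hd | hd
  · have hb0 : b = 0 := le_antisymm (hbd.trans hd.ge) hb
    simp [phiR, hb0, ← hd]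
  rcases eq_or_lt_of_le ha with ha0 | ha0
  · -- a = 0
    have : phiR b (c + d) ≤ phiR b d := by
      rcases eq_or_lt_of_le hb with hb0 | hb0
      · simp [phiR, ← hb0]
      have : Real.log d ≤ Real.log (c + d) := Real.log_le_log hd (by linarith)
      have := mul_le_mul_of_nonneg_left this hb
      simp only [phiR]; linarith
    calc phiR (a + b) (c + d) = phiR b (c + d) := by rw [← ha0]; ring_nf
      _ ≤ phiR b d := this
      _ ≤ phiR a c + phiR b d := by simp [phiR, ← ha0]
  rcases eq_or_lt_of_le hb with hb0 | hb0
  · have : phiR a (c + d) ≤ phiR a c := by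
      have : Real.log c ≤ Real.log (c + d) := Real.log_le_log hc (by linarith)
      have := mul_le_mul_of_nonneg_left this ha
      simp only [phiR]; linarith
    calc phiR (a + b) (c + d) = phiR a (c + d) := by rw [← hb0]; ring_nf
      _ ≤ phiR a c := this
      _ ≤ phiR a c + phiR b d := by simp [phiR, ← hb0]
  -- main case: a, b > 0 hence c, d > 0
  have hcd : 0 < c + d := by linarith
  have key := Real.convexOn_mul_log.2 (Set.mem_Ici.2 (div_nonneg ha hc.le))
    (Set.mem_Ici.2 (div_nonneg hb hd.le))
    (div_nonneg hc.le hcd.le) (div_nonneg hd.le hcd.le)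
    (by field_simp)
  have hcomb : (c / (c + d)) • (a / c) + (d / (c + d)) • (b / d) = (a + b) / (c + d) := by
    simp only [smul_eq_mul]
    field_simp
  rw [hcomb] at key
  have key2 := mul_le_mul_of_nonneg_left key hcd.le
  have e1 : (c + d) * ((a + b) / (c + d) * Real.log ((a + b) / (c + d))) = phiR (a + b) (c + d) := by
    rw [Real.log_div (by positivity) (ne_of_gt hcd)]
    field_simp [phiR]
    unfold phiR; ring
  have e2 : (c + d) * ((c / (c + d)) • (a / c * Real.log (a / c)) + (d / (c + d)) • (b / d * Real.log (b / d))) = phiR a c + phiR b d := by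
    rw [Real.log_div (ne_of_gt ha0) (ne_of_gt hc), Real.log_div (ne_of_gt hb0) (ne_of_gt hd)]
    simp only [smul_eq_mul, phiR]
    field_simp
  rw [e1, e2] at key2
  exact key2

lemma Ravg_eq {S A : Type} [Fintype S] [Fintype A]
    (r : S → A → ℝ) (α β : ℝ) (p : S → A → ℝ) :
    Ravg r α β p = (∑ s, ∑ a, p s a * r s a)
      - α * ∑ s, ∑ a, phiR (p s a) (∑ b, p s b)
      - β * ∑ s, (∑ b, p s b) * Real.log (∑ b, p s b) := by
  have h : ∀ s : S, ∑ a, p s a * Real.log (∑ b, p s b)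
      = (∑ b, p s b) * Real.log (∑ b, p s b) := by
    intro s; rw [← Finset.sum_mul]
  have h2 : ∑ s, ∑ a, phiR (p s a) (∑ b, p s b)
      = (∑ s, ∑ a, p s a * Real.log (p s a)) - ∑ s, (∑ b, p s b) * Real.log (∑ b, p s b) := by
    rw [← Finset.sum_sub_distrib]
    refine Finset.sum_congr rfl fun s _ => ?_
    rw [← h s, ← Finset.sum_sub_distrib]
    exact Finset.sum_congr rfl fun a _ => rfl
  rw [Ravg, h2]
  have h3 : ∑ s : S, ∑ a, p s a * Real.log (∑ b, p s b)
      = ∑ s, (∑ b, p s b) * Real.log (∑ b, p s b) :=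
    Finset.sum_congr rfl fun s _ => h s
  rw [h3]; ring


/-- for `α ≥ 0`, `β ≥ 0`, the average total reward is concave on `Δ`. -/
theorem Ravg_concaveOn {S A : Type} [Fintype S] [Fintype A] [Nonempty S] [Nonempty A]
    (r : S → A → ℝ) (α β : ℝ) (hα : 0 ≤ α) (hβ : 0 ≤ β)
    (p q : S → A → ℝ)
    (hp0 : ∀ s a, 0 ≤ p s a) (hp1 : (∑ s, ∑ a, p s a) = 1)
    (hq0 : ∀ s a, 0 ≤ q s a) (hq1 : (∑ s, ∑ a, q s a) = 1)
    (t : ℝ) (ht0 : 0 ≤ t) (ht1 : t ≤ 1) :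
    Ravg r α β (fun s a => t * p s a + (1 - t) * q s a)
      ≥ t * Ravg r α β p + (1 - t) * Ravg r α β q := by
  set P : S → A → ℝ := fun s a => t * p s a + (1 - t) * q s a with hP
  have ht1' : 0 ≤ 1 - t := by linarith
  have hmarg : ∀ s, (∑ b, P s b) = t * (∑ b, p s b) + (1 - t) * (∑ b, q s b) := by
    intro s
    simp only [hP, Finset.sum_add_distrib, Finset.mul_sum]
  have hple : ∀ s a, p s a ≤ ∑ b, p s b := fun s a =>
    Finset.single_le_sum (fun b _ => hp0 s b) (Finset.mem_univ a)
  have hqle : ∀ s a, q s a ≤ ∑ b, q s b := fun s a =>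
    Finset.single_le_sum (fun b _ => hq0 s b) (Finset.mem_univ a)
  -- linear part
  have hL : (∑ s, ∑ a, P s a * r s a)
      = t * (∑ s, ∑ a, p s a * r s a) + (1 - t) * (∑ s, ∑ a, q s a * r s a) := by
    simp only [hP, Finset.mul_sum, ← Finset.sum_add_distrib]
    refine Finset.sum_congr rfl fun s _ => Finset.sum_congr rfl fun a _ => by ring
  -- conditional entropy part
  have hC : (∑ s, ∑ a, phiR (P s a) (∑ b, P s b))
      ≤ t * (∑ s, ∑ a, phiR (p s a) (∑ b, p s b))
        + (1 - t) * (∑ s, ∑ a, phiR (q s a) (∑ b, q s b)) := by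
    simp only [Finset.mul_sum, ← Finset.sum_add_distrib]
    refine Finset.sum_le_sum fun s _ => Finset.sum_le_sum fun a _ => ?_
    rw [hmarg s]
    calc phiR (t * p s a + (1 - t) * q s a) (t * (∑ b, p s b) + (1 - t) * (∑ b, q s b))
        ≤ phiR (t * p s a) (t * (∑ b, p s b)) + phiR ((1 - t) * q s a) ((1 - t) * (∑ b, q s b)) :=
          phiR_add (mul_nonneg ht0 (hp0 s a)) (mul_le_mul_of_nonneg_left (hple s a) ht0)
            (mul_nonneg ht1' (hq0 s a)) (mul_le_mul_of_nonneg_left (hqle s a) ht1')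
      _ = t * phiR (p s a) (∑ b, p s b) + (1 - t) * phiR (q s a) (∑ b, q s b) := by
          rw [phiR_scale ht0 (hp0 s a) (hple s a), phiR_scale ht1' (hq0 s a) (hqle s a)]
  -- marginal entropy part
  have hM : (∑ s, (∑ b, P s b) * Real.log (∑ b, P s b))
      ≤ t * (∑ s, (∑ b, p s b) * Real.log (∑ b, p s b))
        + (1 - t) * (∑ s, (∑ b, q s b) * Real.log (∑ b, q s b)) := by
    simp only [Finset.mul_sum, ← Finset.sum_add_distrib]
    refine Finset.sum_le_sum fun s _ => ?_
    rw [hmarg s]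
    have hpm : (0:ℝ) ≤ ∑ b, p s b := Finset.sum_nonneg fun b _ => hp0 s b
    have hqm : (0:ℝ) ≤ ∑ b, q s b := Finset.sum_nonneg fun b _ => hq0 s b
    have := Real.convexOn_mul_log.2 (Set.mem_Ici.2 hpm) (Set.mem_Ici.2 hqm) ht0 ht1'
      (by ring)
    simpa using this
  rw [Ravg_eq, Ravg_eq, Ravg_eq]
  have h1 := mul_le_mul_of_nonneg_left hC hα
  have h2 := mul_le_mul_of_nonneg_left hM hβ
  rw [hL]
  nlinarith [h1, h2]
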